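/- arXiv:1306.6708 — 4 statements merged into one kernel-verified Lean document; each statement's English description precedes it below -/
import Mathlib

section
/- Let R and S be associative unital rings (not necessarily commutative). If P and P' are (S,R)-bimodules such that the functors P ⊗_R (−) and P' ⊗_R (−) : ModuleCat R ⥤ ModuleCat S are naturally isomorphic, then P and P' are isomorphic as (S,R)-bimodules, i.e. there is an additive bijection P → P' commuting with both the left S-action and the right R-action. (Uniqueness clause of the Eilenberg–Watts theorem, Theorem 8.1 of the paper.) -/
open TensorProduct CategoryTheory CategoryTheory.Limits MulOpposite

noncomputable section

variable (R S : Type) [Ring R] [Ring S]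

section Tensor


variable (P : Type) [AddCommGroup P] [Module S P] [Module Rᵐᵒᵖ P] [SMulCommClass S Rᵐᵒᵖ P]

def relSet (N : Type) [AddCommGroup N] [Module R N] : Set (P ⊗[ℤ] N) :=
  {z | ∃ (p : P) (r : R) (n : N), z = ((op r • p) ⊗ₜ[ℤ] n) - (p ⊗ₜ[ℤ] (r • n))}

def relSub (N : Type) [AddCommGroup N] [Module R N] : Submodule S (P ⊗[ℤ] N) where
  carrier := AddSubgroup.closure (relSet R P N)
  add_mem' := AddSubgroup.add_mem _
  zero_mem' := AddSubgroup.zero_mem _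
  smul_mem' := by
    intro s x hx
    simp only [SetLike.mem_coe] at hx ⊢
    induction hx using AddSubgroup.closure_induction with
    | mem z hz =>
      obtain ⟨p, r, n, rfl⟩ := hz
      refine AddSubgroup.subset_closure ⟨s • p, r, n, ?_⟩
      rw [smul_sub, smul_tmul', smul_tmul', smul_comm]
    | zero => simpa using AddSubgroup.zero_mem _
    | add a b _ _ ha hb => rw [smul_add]; exact AddSubgroup.add_mem _ ha hb
    | neg a _ ha => rw [smul_neg]; exact AddSubgroup.neg_mem _ ha

/-- `id_P ⊗ f` on the `ℤ`-tensor products, as an `S`-linear map. -/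
def mapAux {N N' : Type} [AddCommGroup N] [Module R N] [AddCommGroup N'] [Module R N']
    (f : N →ₗ[R] N') : P ⊗[ℤ] N →ₗ[S] P ⊗[ℤ] N' :=
  TensorProduct.AlgebraTensorModule.map (LinearMap.id : P →ₗ[S] P)
    f.toAddMonoidHom.toIntLinearMap

theorem mapAux_mem {N N' : Type} [AddCommGroup N] [Module R N] [AddCommGroup N']
    [Module R N'] (f : N →ₗ[R] N') :
    ∀ x ∈ AddSubgroup.closure (relSet R P N),
      mapAux R S P f x ∈ AddSubgroup.closure (relSet R P N') := by
  intro x hx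
  induction hx using AddSubgroup.closure_induction with
  | mem z hz =>
    obtain ⟨p, r, n, rfl⟩ := hz
    refine AddSubgroup.subset_closure ⟨p, r, f n, ?_⟩
    rw [map_sub]
    simp [mapAux]
  | zero => simpa using AddSubgroup.zero_mem _
  | add a b _ _ ha hb => rw [map_add]; exact AddSubgroup.add_mem _ ha hb
  | neg a _ ha => rw [map_neg]; exact AddSubgroup.neg_mem _ ha

theorem relSub_le_comap {N N' : Type} [AddCommGroup N] [Module R N] [AddCommGroup N']
    [Module R N'] (f : N →ₗ[R] N') :
    relSub R S P N ≤ (relSub R S P N').comap (mapAux R S P f) :=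
  fun x hx => mapAux_mem R S P f x hx

/-- The functor `P ⊗_R (−) : ModuleCat R ⥤ ModuleCat S` for an `(S,R)`-bimodule `P`. -/
def tensorFunctor : ModuleCat R ⥤ ModuleCat S where
  obj N := ModuleCat.of S ((P ⊗[ℤ] N) ⧸ relSub R S P N)
  map {N N'} f := ModuleCat.ofHom
    (Submodule.mapQ _ _ (mapAux R S P f.hom) (relSub_le_comap R S P f.hom))
  map_id N := by
    apply ModuleCat.hom_ext
    apply Submodule.linearMap_qext
    apply LinearMap.restrictScalars_injective ℤ
    apply TensorProduct.ext'
    intro p n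
    simp only [LinearMap.restrictScalars_apply, LinearMap.comp_apply, Submodule.mkQ_apply]
    rfl
  map_comp {N N' N''} f g := by
    apply ModuleCat.hom_ext
    apply Submodule.linearMap_qext
    apply LinearMap.restrictScalars_injective ℤ
    apply TensorProduct.ext'
    intro p n
    simp only [LinearMap.restrictScalars_apply, LinearMap.comp_apply, Submodule.mkQ_apply,
      ModuleCat.hom_comp]
    rfl

end Tensor

section EWHelpers

variable (P : Type) [AddCommGroup P] [Module S P] [Module Rᵐᵒᵖ P] [SMulCommClass S Rᵐᵒᵖ P]

def invBil : P →ₗ[S] (R →ₗ[ℤ] P) where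
  toFun p :=
    { toFun := fun r => op r • p
      map_add' := fun r r' => by simp [add_smul]
      map_smul' := fun z r => by
        simp only [op_smul, RingHom.id_apply]
        rw [smul_assoc] }
  map_add' p q := by ext r; simp [smul_add]
  map_smul' s p := by ext r; exact (smul_comm s (op r) p).symm

def invQ : ((P ⊗[ℤ] R) ⧸ relSub R S P R) →ₗ[S] P :=
  Submodule.liftQ _ (TensorProduct.AlgebraTensorModule.lift (invBil R S P)) (by
    intro x hx
    have hx' : x ∈ AddSubgroup.closure (relSet R P R) := hx
    clear hx
    simp only [LinearMap.mem_ker]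
    induction hx' using AddSubgroup.closure_induction with
    | mem z hz =>
      obtain ⟨p, r, n, rfl⟩ := hz
      simp [invBil, smul_eq_mul, op_mul, mul_smul]
    | zero => simp
    | add a b _ _ ha hb => rw [map_add, ha, hb, add_zero]
    | neg a _ ha => rw [map_neg, ha, neg_zero])

def toQ : P →ₗ[S] ((P ⊗[ℤ] R) ⧸ relSub R S P R) where
  toFun p := Submodule.Quotient.mk (p ⊗ₜ[ℤ] (1 : R))
  map_add' p q := by simp [add_tmul]
  map_smul' s p := by
    simp only [RingHom.id_apply]
    rw [← Submodule.Quotient.mk_smul, smul_tmul']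

theorem invQ_toQ (p : P) : invQ R S P (toQ R S P p) = p := by
  simp [invQ, toQ, invBil]

theorem toQ_invQ (x : (P ⊗[ℤ] R) ⧸ relSub R S P R) : toQ R S P (invQ R S P x) = x := by
  obtain ⟨y, rfl⟩ := Submodule.Quotient.mk_surjective _ x
  induction y with
  | zero => simp
  | tmul p r =>
    show Submodule.Quotient.mk
        ((invQ R S P (Submodule.Quotient.mk (p ⊗ₜ[ℤ] r))) ⊗ₜ[ℤ] (1 : R)) = _
    have : invQ R S P (Submodule.Quotient.mk (p ⊗ₜ[ℤ] r)) = op r • p := by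
      simp [invQ, invBil]
    rw [this, Submodule.Quotient.eq]
    have : (op r • p) ⊗ₜ[ℤ] (1 : R) - p ⊗ₜ[ℤ] r
        = (op r • p) ⊗ₜ[ℤ] (1 : R) - p ⊗ₜ[ℤ] (r • (1 : R)) := by
      rw [smul_eq_mul, mul_one]
    rw [this]
    exact AddSubgroup.subset_closure ⟨p, r, 1, rfl⟩
  | add a b ha hb =>
    rw [Submodule.Quotient.mk_add, map_add, map_add, ha, hb]

/-- Right multiplication by `r` as a morphism in `ModuleCat R`. -/
def rmul (r : R) : ModuleCat.of R R ⟶ ModuleCat.of R R :=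
  ModuleCat.ofHom
    { toFun := fun x => x * r
      map_add' := fun a b => add_mul a b r
      map_smul' := fun s x => by simp [smul_eq_mul, mul_assoc] }

theorem map_rmul_toQ (r : R) (p : P) :
    (tensorFunctor R S P).map (rmul R r) (toQ R S P p) = toQ R S P (op r • p) := by
  show Submodule.mapQ _ _ (mapAux R S P (rmul R r).hom) (relSub_le_comap R S P (rmul R r).hom)
      (Submodule.Quotient.mk (p ⊗ₜ[ℤ] (1 : R)))
      = Submodule.Quotient.mk ((op r • p) ⊗ₜ[ℤ] (1 : R))
  rw [Submodule.mapQ_apply]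
  have : mapAux R S P (rmul R r).hom (p ⊗ₜ[ℤ] (1 : R)) = p ⊗ₜ[ℤ] r := by
    show p ⊗ₜ[ℤ] ((1 : R) * r) = p ⊗ₜ[ℤ] r
    rw [one_mul]
  rw [this, Submodule.Quotient.eq]
  show p ⊗ₜ[ℤ] r - (op r • p) ⊗ₜ[ℤ] (1 : R) ∈ relSub R S P R
  have h2 : p ⊗ₜ[ℤ] r - (op r • p) ⊗ₜ[ℤ] (1 : R)
      = -(((op r • p) ⊗ₜ[ℤ] (1 : R)) - p ⊗ₜ[ℤ] (r • (1 : R))) := by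
    rw [smul_eq_mul, mul_one, neg_sub]
  rw [h2]
  exact AddSubgroup.neg_mem _ (AddSubgroup.subset_closure ⟨p, r, (1 : R), rfl⟩)

end EWHelpers

/-- **Uniqueness in the Eilenberg–Watts theorem.**  If `P` and `P'` are `(S,R)`-bimodules
such that the functors `P ⊗_R (−)` and `P' ⊗_R (−) : ModuleCat R ⥤ ModuleCat S` are
naturally isomorphic, then `P` and `P'` are isomorphic as `(S,R)`-bimodules: there is an
additive bijection `P → P'` commuting with both the left `S`-action and the right
`R`-action. -/
theorem eilenberg_watts_unique (P P' : Type)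
    [AddCommGroup P] [Module S P] [Module Rᵐᵒᵖ P] [SMulCommClass S Rᵐᵒᵖ P]
    [AddCommGroup P'] [Module S P'] [Module Rᵐᵒᵖ P'] [SMulCommClass S Rᵐᵒᵖ P']
    (h : Nonempty (tensorFunctor R S P ≅ tensorFunctor R S P')) :
    ∃ e : P ≃+ P',
      (∀ (s : S) (p : P), e (s • p) = s • e p) ∧
      (∀ (r : R) (p : P), e (op r • p) = op r • e p) := by
  obtain ⟨η⟩ := h
  let f := η.hom.app (ModuleCat.of R R)
  let g := η.inv.app (ModuleCat.of R R)
  have hgf : ∀ x, g (f x) = x := fun x => by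
    have := η.hom_inv_id
    have h2 := congrArg (fun α => α.app (ModuleCat.of R R)) this
    simp only [NatTrans.comp_app, NatTrans.id_app] at h2
    exact congrFun (congrArg (fun (m : _ ⟶ _) => (m : _ → _)) h2) x
  have hfg : ∀ x, f (g x) = x := fun x => by
    have := η.inv_hom_id
    have h2 := congrArg (fun α => α.app (ModuleCat.of R R)) this
    simp only [NatTrans.comp_app, NatTrans.id_app] at h2
    exact congrFun (congrArg (fun (m : _ ⟶ _) => (m : _ → _)) h2) x
  refine ⟨{ toFun := fun p => invQ R S P' (f (toQ R S P p))
            invFun := fun q => invQ R S P (g (toQ R S P' q))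
            left_inv := fun p => by
              simp only [toQ_invQ, hgf, invQ_toQ]
              erw [toQ_invQ, hgf, invQ_toQ]
            right_inv := fun q => by
              simp only [toQ_invQ, hfg, invQ_toQ]
              erw [toQ_invQ, hfg, invQ_toQ]
            map_add' := fun p q => by simp only [map_add]; erw [map_add, map_add] }, ?_, ?_⟩
  · intro s p
    simp only [AddEquiv.coe_mk, Equiv.coe_fn_mk, map_smul]
    erw [map_smul, map_smul]
  · intro r p
    have hnat := η.hom.naturality (rmul R r)
    have hx := congrFun (congrArg (fun (m : _ ⟶ _) => (m : _ → _)) hnat) (toQ R S P p)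
    simp only [ConcreteCategory.comp_apply] at hx
    obtain ⟨q, hq⟩ : ∃ q, toQ R S P' q = f (toQ R S P p) :=
      ⟨invQ R S P' (f (toQ R S P p)), toQ_invQ _ _ _ _⟩
    have h3 := congrArg f (map_rmul_toQ R S P r p)
    have h5 : (tensorFunctor R S P').map (rmul R r) (f (toQ R S P p))
        = toQ R S P' (op r • q) := by
      rw [← hq]; exact map_rmul_toQ R S P' r q
    have hchain : f (toQ R S P (op r • p)) = toQ R S P' (op r • q) :=
      h3.symm.trans (hx.trans h5)
    show invQ R S P' (f (toQ R S P (op r • p))) = op r • invQ R S P' (f (toQ R S P p))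
    rw [hchain, invQ_toQ, ← hq, invQ_toQ]

end
end

section
/- Fix k ≥ 1 and let M be a nonempty subset of EuclideanSpace ℝ (Fin k) (in the paper, the image of a closed manifold under an embedding into ℝ^k). For all natural numbers m, n and all v : Fin m → E, w : Fin n → E (with L² norms), the concatenation Fin.append v w : Fin (m+n) → E satisfies infDist(Fin.append v w, Δ_{m+n}(M)) ≥ max(infDist(v, Δ_m(M)), infDist(w, Δ_n(M))). Consequently, for every ε > 0 the closed ε-neighborhoods D(m) = {v : infDist(v, Δ_m(M)) ≤ ε} satisfy D(m+n) ⊆ D(m) × D(n) under the canonical identification (Fin (m+n) → E) ≅ (Fin m → E) × (Fin n → E). (The first displayed inclusion in the proof of Proposition 3.1, underlying the multiplication μ on M^{−TM}.) -/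
open Metric

noncomputable section

variable (k : ℕ)

/-- `ℝ^k`. -/
abbrev E (k : ℕ) := EuclideanSpace ℝ (Fin k)

/-- `(Fin m → ℝ^k)` with the `L²` norm. -/
abbrev mE (k m : ℕ) := PiLp 2 (fun _ : Fin m => E k)

/-- The diagonal map `Δ_m : E → (Fin m → E)`. -/
def diagL2 (m : ℕ) (v : E k) : mE k m :=
  (WithLp.equiv 2 (Fin m → E k)).symm (fun _ => v)

/-- The image `Δ_m(M)` of a set `M ⊆ E` under the diagonal map. -/
def diagSet (M : Set (E k)) (m : ℕ) : Set (mE k m) := (diagL2 k m) '' M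

/-- Concatenation `Fin.append v w : Fin (m+n) → E`, as a map of `L²` spaces. -/
def appendL2 {m n : ℕ} (v : mE k m) (w : mE k n) : mE k (m + n) :=
  (WithLp.equiv 2 (Fin (m + n) → E k)).symm
    (Fin.append (WithLp.equiv 2 (Fin m → E k) v) (WithLp.equiv 2 (Fin n → E k) w))

lemma dist_append_sq {m n : ℕ} (v : mE k m) (w : mE k n) (x : E k) :
    dist (appendL2 k v w) (diagL2 k (m + n) x) ^ 2 =
      dist v (diagL2 k m x) ^ 2 + dist w (diagL2 k n x) ^ 2 := by
  have h1 := PiLp.dist_eq_of_L2 (appendL2 k v w) (diagL2 k (m + n) x)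
  have h2 := PiLp.dist_eq_of_L2 v (diagL2 k m x)
  have h3 := PiLp.dist_eq_of_L2 w (diagL2 k n x)
  have n1 : (0:ℝ) ≤ ∑ i, dist (appendL2 k v w i) (diagL2 k (m + n) x i) ^ 2 :=
    Finset.sum_nonneg fun i _ => sq_nonneg _
  have n2 : (0:ℝ) ≤ ∑ i, dist (v i) (diagL2 k m x i) ^ 2 :=
    Finset.sum_nonneg fun i _ => sq_nonneg _
  have n3 : (0:ℝ) ≤ ∑ i, dist (w i) (diagL2 k n x i) ^ 2 :=
    Finset.sum_nonneg fun i _ => sq_nonneg _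
  rw [h1, h2, h3, Real.sq_sqrt n1, Real.sq_sqrt n2, Real.sq_sqrt n3, Fin.sum_univ_add]
  congr 1
  · apply Finset.sum_congr rfl
    intro i _
    congr 1
    simp [appendL2, diagL2]
  · apply Finset.sum_congr rfl
    intro i _
    congr 1
    simp [appendL2, diagL2]

lemma dist_le_left {m n : ℕ} (v : mE k m) (w : mE k n) (x : E k) :
    dist v (diagL2 k m x) ≤ dist (appendL2 k v w) (diagL2 k (m + n) x) := by
  have h := dist_append_sq k v w x
  nlinarith [dist_nonneg (x := v) (y := diagL2 k m x), dist_nonneg (x := w) (y := diagL2 k n x),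
    dist_nonneg (x := appendL2 k v w) (y := diagL2 k (m + n) x), sq_nonneg (dist w (diagL2 k n x))]

lemma dist_le_right {m n : ℕ} (v : mE k m) (w : mE k n) (x : E k) :
    dist w (diagL2 k n x) ≤ dist (appendL2 k v w) (diagL2 k (m + n) x) := by
  have h := dist_append_sq k v w x
  nlinarith [dist_nonneg (x := v) (y := diagL2 k m x), dist_nonneg (x := w) (y := diagL2 k n x),
    dist_nonneg (x := appendL2 k v w) (y := diagL2 k (m + n) x)]

/-- For a nonempty `M ⊆ ℝ^k`, the distance of a concatenation `Fin.append v w` to the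
diagonal copy `Δ_{m+n}(M)` is at least the max of the distances of `v` to `Δ_m(M)` and of
`w` to `Δ_n(M)`.  Consequently, the closed `ε`-neighborhoods
`D(m) = {v : infDist(v, Δ_m(M)) ≤ ε}` satisfy `D(m+n) ⊆ D(m) × D(n)` under the canonical
identification `(Fin (m+n) → E) ≅ (Fin m → E) × (Fin n → E)`. -/
theorem infDist_append_ge_max (hk : 1 ≤ k) (M : Set (E k)) (hM : M.Nonempty) :
    (∀ (m n : ℕ) (v : mE k m) (w : mE k n),
      infDist (appendL2 k v w) (diagSet k M (m + n)) ≥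
        max (infDist v (diagSet k M m)) (infDist w (diagSet k M n))) ∧
    (∀ ε : ℝ, 0 < ε → ∀ (m n : ℕ) (v : mE k m) (w : mE k n),
      infDist (appendL2 k v w) (diagSet k M (m + n)) ≤ ε →
        infDist v (diagSet k M m) ≤ ε ∧ infDist w (diagSet k M n) ≤ ε) := by
  have key : ∀ (m n : ℕ) (v : mE k m) (w : mE k n),
      infDist (appendL2 k v w) (diagSet k M (m + n)) ≥
        max (infDist v (diagSet k M m)) (infDist w (diagSet k M n)) := by
    intro m n v w
    have : Nonempty ↥(diagSet k M (m + n)) := (hM.image _).to_subtype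
    rw [ge_iff_le, max_le_iff]
    constructor
    · rw [infDist_eq_iInf (s := diagSet k M (m + n))]
      refine le_ciInf fun y => ?_
      obtain ⟨x, hx, hxy⟩ := y.2
      rw [← hxy]
      exact (infDist_le_dist_of_mem (Set.mem_image_of_mem _ hx)).trans (dist_le_left k v w x)
    · rw [infDist_eq_iInf (s := diagSet k M (m + n))]
      refine le_ciInf fun y => ?_
      obtain ⟨x, hx, hxy⟩ := y.2
      rw [← hxy]
      exact (infDist_le_dist_of_mem (Set.mem_image_of_mem _ hx)).trans (dist_le_right k v w x)
  refine ⟨key, fun ε _ m n v w h => ?_⟩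
  have := (key m n v w).trans' (le_max_left _ _)
  have := (key m n v w).trans' (le_max_right _ _)
  exact ⟨by linarith, by linarith⟩

end
end

section
/- Fix k ≥ 1, let M be a nonempty subset of EuclideanSpace ℝ (Fin k), and let ε > 0. For all natural numbers m, n, all v : Fin m → E and w : Fin n → E (with L² norms): if infDist(Fin.append v w, Δ_{m+n}(M)) ≤ ε and either infDist(v, Δ_m(M)) = ε or infDist(w, Δ_n(M)) = ε, then infDist(Fin.append v w, Δ_{m+n}(M)) = ε. Equivalently, writing D(m) = {v : infDist(v, Δ_m(M)) ≤ ε} and S(m) = {v : infDist(v, Δ_m(M)) = ε}, one has D(m+n) ∩ ((S(m) × D(n)) ∪ (D(m) × S(n))) ⊆ S(m+n). (The second displayed inclusion in the proof of Proposition 3.1, showing the multiplication μ on M^{−TM} is well defined on the quotients D(m)/S(m).) -/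
open Metric

noncomputable section

variable (k : ℕ)

lemma dist_appendL2_diag_sq (x : E k) {m n : ℕ} (v : mE k m) (w : mE k n) :
    dist (appendL2 k v w) (diagL2 k (m + n) x) ^ 2
      = dist v (diagL2 k m x) ^ 2 + dist w (diagL2 k n x) ^ 2 := by
  rw [PiLp.dist_eq_of_L2, PiLp.dist_eq_of_L2, PiLp.dist_eq_of_L2,
    Real.sq_sqrt (by positivity), Real.sq_sqrt (by positivity),
    Real.sq_sqrt (by positivity), Fin.sum_univ_add]
  congr 1 <;> refine Finset.sum_congr rfl fun i _ => ?_ <;>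
    simp [appendL2, diagL2, Fin.append_left, Fin.append_right]
/-- For nonempty `M ⊆ ℝ^k` and `ε > 0`: if `infDist(Fin.append v w, Δ_{m+n}(M)) ≤ ε` and
either `infDist(v, Δ_m(M)) = ε` or `infDist(w, Δ_n(M)) = ε`, then
`infDist(Fin.append v w, Δ_{m+n}(M)) = ε`; i.e.
`D(m+n) ∩ ((S(m) × D(n)) ∪ (D(m) × S(n))) ⊆ S(m+n)`. -/
theorem infDist_append_eq_of_boundary (hk : 1 ≤ k) (M : Set (E k)) (hM : M.Nonempty)
    (ε : ℝ) (hε : 0 < ε) (m n : ℕ) (v : mE k m) (w : mE k n)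
    (hD : infDist (appendL2 k v w) (diagSet k M (m + n)) ≤ ε)
    (hS : infDist v (diagSet k M m) = ε ∨ infDist w (diagSet k M n) = ε) :
    infDist (appendL2 k v w) (diagSet k M (m + n)) = ε := by
  refine le_antisymm hD ?_
  have hne : (diagSet k M (m + n)).Nonempty := hM.image _
  have : Nonempty ↑(diagSet k M (m + n)) := hne.to_subtype
  rw [infDist_eq_iInf]
  refine le_ciInf fun y => ?_
  obtain ⟨x, hx, hyx⟩ := y.2
  have key := dist_appendL2_diag_sq k x v w
  have hv : dist v (diagL2 k m x) ≤ dist (appendL2 k v w) (diagL2 k (m + n) x) := by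
    nlinarith [dist_nonneg (x := v) (y := diagL2 k m x),
      dist_nonneg (x := appendL2 k v w) (y := diagL2 k (m + n) x),
      sq_nonneg (dist w (diagL2 k n x))]
  have hw : dist w (diagL2 k n x) ≤ dist (appendL2 k v w) (diagL2 k (m + n) x) := by
    nlinarith [dist_nonneg (x := w) (y := diagL2 k n x),
      dist_nonneg (x := appendL2 k v w) (y := diagL2 k (m + n) x),
      sq_nonneg (dist v (diagL2 k m x))]
  rw [← hyx]
  rcases hS with h | h
  · calc ε = infDist v (diagSet k M m) := h.symm
      _ ≤ dist v (diagL2 k m x) := infDist_le_dist_of_mem ⟨x, hx, rfl⟩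
      _ ≤ _ := hv
  · calc ε = infDist w (diagSet k M n) := h.symm
      _ ≤ dist w (diagL2 k n x) := infDist_le_dist_of_mem ⟨x, hx, rfl⟩
      _ ≤ _ := hw

end
end

section
/- Let C be a symmetric monoidal category and k a natural number. Let T_k : C ⥤ C be the k-th tensor power functor, defined by T_0(X) = 𝟙_C (the monoidal unit), T_{j+1}(X) = T_j(X) ⊗ X, and correspondingly on morphisms (T_0(f) = id, T_{j+1}(f) = T_j(f) ⊗ f). Then T_k admits the structure of a strong symmetric monoidal functor: there are isomorphisms φ⁰ : 𝟙_C ≅ T_k(𝟙_C) and natural isomorphisms φ_{X,Y} : T_k(X) ⊗ T_k(Y) ≅ T_k(X ⊗ Y), built from the braiding, satisfying the coherence axioms for a monoidal functor and compatible with the braidings (a braided/symmetric monoidal functor structure). (The claim in Appendix A.1 of the paper that the k-th power functor i_k is strong symmetric monoidal.) -/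
open CategoryTheory MonoidalCategory

/-- The `k`-th tensor power functor `T_k : C ⥤ C`, defined by `T_0(X) = 𝟙_C`,
`T_{j+1}(X) = T_j(X) ⊗ X`, and correspondingly on morphisms. -/
def powFunctor (C : Type*) [Category C] [MonoidalCategory C] : ℕ → C ⥤ C
  | 0 =>
    { obj := fun _ => 𝟙_ C
      map := fun _ => 𝟙 (𝟙_ C) }
  | (j + 1) =>
    { obj := fun X => (powFunctor C j).obj X ⊗ X
      map := fun f => (powFunctor C j).map f ⊗ₘ f
      map_id := fun X => by simp
      map_comp := fun f g => by simp [tensorHom_comp_tensorHom] }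

section Aux

variable {C D C' D' : Type*} [Category C] [Category D] [Category C'] [Category D']
  [MonoidalCategory C] [MonoidalCategory D] [MonoidalCategory C'] [MonoidalCategory D']

/-- The product of two braided categories is braided. -/
instance prodBraidedAux [BraidedCategory C] [BraidedCategory D] : BraidedCategory (C × D) where
  braiding X Y := (β_ X.1 Y.1).prod (β_ X.2 Y.2)
  braiding_naturality_right X _ _ f := by ext <;> dsimp <;> simp
  braiding_naturality_left f X := by ext <;> dsimp <;> simp
  hexagon_forward X Y Z := by ext <;> dsimp <;> simp [BraidedCategory.hexagon_forward]
  hexagon_reverse X Y Z := by ext <;> dsimp <;> simp [BraidedCategory.hexagon_reverse]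

@[simp] lemma prodBraidedAux_hom_fst [BraidedCategory C] [BraidedCategory D] (X Y : C × D) :
    (β_ X Y).hom.1 = (β_ X.1 Y.1).hom := rfl

@[simp] lemma prodBraidedAux_hom_snd [BraidedCategory C] [BraidedCategory D] (X Y : C × D) :
    (β_ X Y).hom.2 = (β_ X.2 Y.2).hom := rfl

/-- The diagonal functor is braided. -/
instance diagBraidedAux [BraidedCategory C] : (Functor.diag C).Braided where
  braided X Y := by ext <;> simp

/-- The product of two braided functors is braided. -/
instance prodFunctorBraidedAux [BraidedCategory C] [BraidedCategory D] [BraidedCategory C']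
    [BraidedCategory D'] (F : C ⥤ C') (G : D ⥤ D') [F.Braided] [G.Braided] :
    (F.prod G).Braided where
  braided X Y := by ext <;> simp [Functor.LaxBraided.braided]

/-- The pointwise product of two braided functors is braided. -/
instance prod'FunctorBraidedAux [BraidedCategory C] [BraidedCategory C']
    [BraidedCategory D'] (F : C ⥤ C') (G : C ⥤ D') [F.Braided] [G.Braided] :
    (F.prod' G).Braided :=
  inferInstanceAs ((Functor.diag C ⋙ F.prod G).Braided)

open BraidedCategory in
/-- In a symmetric category, `tensorμ` commutes with the braidings. -/
lemma tensorμ_braiding_aux [SymmetricCategory C] (X₁ X₂ Y₁ Y₂ : C) :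
    tensorμ X₁ X₂ Y₁ Y₂ ≫ ((β_ X₁ Y₁).hom ⊗ₘ (β_ X₂ Y₂).hom) =
      (β_ (X₁ ⊗ X₂) (Y₁ ⊗ Y₂)).hom ≫ tensorμ Y₁ Y₂ X₁ X₂ := by
  calc
    _ = 𝟙 _ ⊗≫ X₁ ◁ (β_ X₂ Y₁).hom ▷ Y₂ ⊗≫
        ((β_ X₁ Y₁).hom ▷ (X₂ ⊗ Y₂) ≫ (Y₁ ⊗ X₁) ◁ (β_ X₂ Y₂).hom) ⊗≫ 𝟙 _ := by
      rw [MonoidalCategory.tensorHom_def]; dsimp [tensorμ]; monoidal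
    _ = 𝟙 _ ⊗≫ X₁ ◁ (β_ X₂ Y₁).hom ▷ Y₂ ⊗≫
        ((X₁ ⊗ Y₁) ◁ (β_ X₂ Y₂).hom ≫ (β_ X₁ Y₁).hom ▷ (Y₂ ⊗ X₂)) ⊗≫ 𝟙 _ := by
      rw [← whisker_exchange]
    _ = 𝟙 _ ⊗≫ X₁ ◁ (β_ X₂ Y₁).hom ▷ Y₂ ⊗≫ X₁ ◁ Y₁ ◁ (β_ X₂ Y₂).hom ⊗≫
        (β_ X₁ Y₁).hom ▷ Y₂ ▷ X₂ ⊗≫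
        Y₁ ◁ ((β_ X₁ Y₂).hom ≫ (β_ Y₂ X₁).hom) ▷ X₂ ⊗≫ 𝟙 _ := by
      rw [SymmetricCategory.symmetry]; monoidal
    _ = _ := by
      rw [braiding_tensor_left_hom, braiding_tensor_right_hom, braiding_tensor_right_hom]
      dsimp [tensorμ]; monoidal

/-- In a symmetric category, the tensor product functor `C × C ⥤ C` is braided. -/
instance tensorBraidedAux [SymmetricCategory C] : (tensor C).Braided where
  braided X Y := by
    rw [tensor_μ, tensor_μ]
    simpa using tensorμ_braiding_aux X.1 X.2 Y.1 Y.2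

/-- The constant functor at the unit object is braided. -/
instance powFunctorZeroBraidedAux [BraidedCategory C] : (powFunctor C 0).Braided := by
  letI : (powFunctor C 0).Monoidal :=
    Functor.CoreMonoidal.toMonoidal
      { εIso := Iso.refl _
        μIso := fun X Y => λ_ (𝟙_ C)
        μIso_hom_natural_left := fun f Z => by simp [powFunctor]
        μIso_hom_natural_right := fun Z f => by simp [powFunctor]
        associativity := fun X Y Z => by
          simp [powFunctor, unitors_equal]
        left_unitality := fun X => by simp [powFunctor]
        right_unitality := fun X => by simp [powFunctor, unitors_equal] }
  have hβ : (β_ (𝟙_ C) (𝟙_ C)).hom = 𝟙 _ := by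
    rw [braiding_tensorUnit_right, ← unitors_equal]; simp
  refine { braided := fun X Y => ?_ }
  change (λ_ (𝟙_ C)).hom ≫ 𝟙 (𝟙_ C) = (β_ (𝟙_ C) (𝟙_ C)).hom ≫ (λ_ (𝟙_ C)).hom
  rw [hβ]; simp

end Aux

/-- The `k`-th tensor power functor on a symmetric monoidal category admits the structure
of a strong symmetric (braided) monoidal functor. -/
theorem powFunctor_braided (C : Type*) [Category C] [MonoidalCategory C]
    [SymmetricCategory C] (k : ℕ) :
    Nonempty ((powFunctor C k).Braided) := by
  induction k with
  | zero => exact ⟨inferInstance⟩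
  | succ j ih =>
    obtain ⟨inst⟩ := ih
    exact ⟨inferInstanceAs ((Functor.prod' (powFunctor C j) (𝟭 C) ⋙ tensor C).Braided)⟩
end
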